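/- Let x be a strictly positive sequence-form strategy and z ∈ R^Σ any vector. Then the squared local dual norm of z at x with respect to the dilated entropy DGF satisfies ‖z‖_{*,x}² = Σ_{j∈J} Σ_{a∈A_j} (u_{ja}ᵀ (z ∘ x))² / (w_j x_{ja}). -/

import Mathlib

inductive TFT : Type where
  | term : TFT
  | dec : (n : ℕ) → (Fin n → TFT) → TFT
  | obs : (n : ℕ) → (Fin n → TFT) → TFT

namespace TFT

noncomputable def wt : TFT → ℝ
  | term => 0
  | dec _ c => 2 + 2 * (List.ofFn fun i => wt (c i)).foldr max 0
  | obs _ c => ∑ i, wt (c i)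

def Seq : TFT → Type
  | term => Empty
  | dec n c => Σ i : Fin n, Option (Seq (c i))
  | obs n c => Σ i : Fin n, Seq (c i)

instance seqFintype : (t : TFT) → Fintype (Seq t)
  | term => inferInstanceAs (Fintype Empty)
  | dec n c => by
      letI := fun i => seqFintype (c i)
      exact inferInstanceAs (Fintype (Σ i : Fin n, Option (Seq (c i))))
  | obs n c => by
      letI := fun i => seqFintype (c i)
      exact inferInstanceAs (Fintype (Σ i : Fin n, Seq (c i)))

instance seqDecEq : (t : TFT) → DecidableEq (Seq t)
  | term => inferInstanceAs (DecidableEq Empty)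
  | dec n c => by
      letI := fun i => seqDecEq (c i)
      exact inferInstanceAs (DecidableEq (Σ i : Fin n, Option (Seq (c i))))
  | obs n c => by
      letI := fun i => seqDecEq (c i)
      exact inferInstanceAs (DecidableEq (Σ i : Fin n, Seq (c i)))

def IsSF : (t : TFT) → (Seq t → ℝ) → ℝ → Prop
  | term, _, _ => True
  | dec _ c, x, par =>
      (∑ i, x ⟨i, none⟩) = par ∧
      ∀ i, IsSF (c i) (fun s => x ⟨i, some s⟩) (x ⟨i, none⟩)
  | obs _ c, x, par => ∀ i, IsSF (c i) (fun s => x ⟨i, s⟩) par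

noncomputable def decW : (t : TFT) → Seq t → ℝ
  | term => fun s => Empty.elim s
  | dec n c => fun σ => match σ with
      | ⟨_, none⟩ => wt (dec n c)
      | ⟨i, some s⟩ => decW (c i) s
  | obs _ c => fun σ => decW (c σ.1) σ.2

noncomputable def succW : (t : TFT) → Seq t → ℝ
  | term => fun s => Empty.elim s
  | dec _ c => fun σ => match σ with
      | ⟨i, none⟩ => wt (c i)
      | ⟨i, some s⟩ => succW (c i) s
  | obs _ c => fun σ => succW (c σ.1) σ.2

def parent : (t : TFT) → Seq t → Option (Seq t)
  | term => fun s => Empty.elim s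
  | dec _ c => fun σ => match σ with
      | ⟨_, none⟩ => none
      | ⟨i, some s⟩ =>
          some (match parent (c i) s with
            | none => ⟨i, none⟩
            | some q => ⟨i, some q⟩)
  | obs _ c => fun σ => (parent (c σ.1) σ.2).map fun q => ⟨σ.1, q⟩

noncomputable def u : (t : TFT) → Seq t → Seq t → ℝ
  | term => fun s => Empty.elim s
  | dec _ c => fun σ σ' => match σ, σ' with
      | ⟨i, none⟩, ⟨i', _⟩ => if i' = i then 1 else 0
      | ⟨_, some _⟩, ⟨_, none⟩ => 0
      | ⟨i, some s⟩, ⟨i', some s'⟩ => if h : i' = i then u (c i) s (h ▸ s') else 0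
  | obs _ c => fun σ σ' =>
      if h : σ'.1 = σ.1 then u (c σ.1) σ.2 (h ▸ σ'.2) else 0

/-- The Hessian of the dilated entropy DGF at a strictly positive sequence-form
strategy `x`, given entrywise. -/
noncomputable def hess (t : TFT) (x : Seq t → ℝ) : Matrix (Seq t) (Seq t) ℝ :=
  fun σ σ' =>
    if σ' = σ then (decW t σ + succW t σ) / x σ
    else if parent t σ' = some σ then -(decW t σ') / x σ
    else if parent t σ = some σ' then -(decW t σ) / x σ'
    else 0

/-- The dilated entropy distance-generating function. -/
noncomputable def psi : (t : TFT) → (Seq t → ℝ) → ℝ → ℝ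
  | term, _, _ => 0
  | dec n c, x, par =>
      wt (dec n c) *
          (par * Real.log n + ∑ i, x ⟨i, none⟩ * Real.log (x ⟨i, none⟩ / par)) +
        ∑ i, psi (c i) (fun s => x ⟨i, some s⟩) (x ⟨i, none⟩)
  | obs _ c, x, par => ∑ i, psi (c i) (fun s => x ⟨i, s⟩) par

/-- The strategy that randomizes uniformly at every decision point. -/
def IsUniform : (t : TFT) → (Seq t → ℝ) → ℝ → Prop
  | term, _, _ => True
  | dec n c, x, par =>
      (∀ i : Fin n, x ⟨i, none⟩ = par / n) ∧
      ∀ i, IsUniform (c i) (fun s => x ⟨i, some s⟩) (x ⟨i, none⟩)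
  | obs _ c, x, par => ∀ i, IsUniform (c i) (fun s => x ⟨i, s⟩) par


/-! ### Auxiliary lemmas -/

section Aux

theorem opt_nc {α : Type*} {P : Prop} {a b : Option α} (h : a = b) :
    Option.noConfusionType P a b := Option.noConfusion rfl (heq_of_eq h)

theorem sum_dec {n : ℕ} {c : Fin n → TFT} (f : Seq (dec n c) → ℝ) :
    ∑ σ, f σ = ∑ i, (f ⟨i, none⟩ + ∑ s, f ⟨i, some s⟩) := by
  have h : ∀ g : (Σ i : Fin n, Option (Seq (c i))) → ℝ,
      ∑ p, g p = ∑ i, (g ⟨i, none⟩ + ∑ s, g ⟨i, some s⟩) := by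
    intro g
    rw [← Finset.univ_sigma_univ, Finset.sum_sigma]
    exact Finset.sum_congr rfl fun i _ => by rw [Fintype.sum_option]
  exact h f

theorem sum_obs {n : ℕ} {c : Fin n → TFT} (f : Seq (obs n c) → ℝ) :
    ∑ σ, f σ = ∑ i, ∑ s, f ⟨i, s⟩ := by
  have h : ∀ g : (Σ i : Fin n, Seq (c i)) → ℝ,
      ∑ p, g p = ∑ i, ∑ s, g ⟨i, s⟩ := by
    intro g
    rw [← Finset.univ_sigma_univ, Finset.sum_sigma]
  exact h f

theorem dec_mk_eq_mk {n : ℕ} {c : Fin n → TFT} {i k : Fin n} {o : Option (Seq (c i))}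
    {o' : Option (Seq (c k))} :
    @Eq (Seq (dec n c)) ⟨i, o⟩ ⟨k, o'⟩ ↔ i = k ∧ HEq o o' := Sigma.mk.inj_iff

theorem obs_mk_eq_mk {n : ℕ} {c : Fin n → TFT} {i k : Fin n} {s : Seq (c i)}
    {s' : Seq (c k)} :
    @Eq (Seq (obs n c)) ⟨i, s⟩ ⟨k, s'⟩ ↔ i = k ∧ HEq s s' := Sigma.mk.inj_iff

theorem dec_mk_ne {n : ℕ} {c : Fin n → TFT} {i k : Fin n} {o : Option (Seq (c i))}
    {o' : Option (Seq (c k))} (h : i ≠ k) :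
    @Ne (Seq (dec n c)) ⟨i, o⟩ ⟨k, o'⟩ := fun he => h (congrArg Sigma.fst he)

theorem obs_mk_ne {n : ℕ} {c : Fin n → TFT} {i k : Fin n} {s : Seq (c i)}
    {s' : Seq (c k)} (h : i ≠ k) :
    @Ne (Seq (obs n c)) ⟨i, s⟩ ⟨k, s'⟩ := fun he => h (congrArg Sigma.fst he)

theorem dec_mk_eq_same {n : ℕ} {c : Fin n → TFT} {i : Fin n} {o o' : Option (Seq (c i))} :
    (@Eq (Seq (dec n c)) ⟨i, o⟩ ⟨i, o'⟩) ↔ o = o' := by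
  rw [dec_mk_eq_mk]; simp

theorem obs_mk_eq_same {n : ℕ} {c : Fin n → TFT} {i : Fin n} {s s' : Seq (c i)} :
    (@Eq (Seq (obs n c)) ⟨i, s⟩ ⟨i, s'⟩) ↔ s = s' := by
  rw [obs_mk_eq_mk]; simp

theorem parent_dec_none {n : ℕ} {c : Fin n → TFT} (i : Fin n) :
    parent (dec n c) ⟨i, none⟩ = none := by rw [parent]

theorem parent_dec_some_none {n : ℕ} {c : Fin n → TFT} {i : Fin n} {s : Seq (c i)}
    (h : parent (c i) s = none) :
    parent (dec n c) ⟨i, some s⟩ = some ⟨i, none⟩ := by simp only [parent]; rw [h]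

theorem parent_dec_some_some {n : ℕ} {c : Fin n → TFT} {i : Fin n} {s q : Seq (c i)}
    (h : parent (c i) s = some q) :
    parent (dec n c) ⟨i, some s⟩ = some ⟨i, some q⟩ := by simp only [parent]; rw [h]

theorem parent_obs {n : ℕ} {c : Fin n → TFT} (i : Fin n) (s : Seq (c i)) :
    parent (obs n c) ⟨i, s⟩ = (parent (c i) s).map (β := Seq (obs n c)) fun q => ⟨i, q⟩ := by rw [parent]

theorem u_dec_root {n : ℕ} {c : Fin n → TFT} (k i : Fin n) (o : Option (Seq (c i))) :
    u (dec n c) ⟨k, none⟩ ⟨i, o⟩ = if i = k then 1 else 0 := by simp only [u]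

theorem u_dec_sn {n : ℕ} {c : Fin n → TFT} (k i : Fin n) (r : Seq (c k)) :
    u (dec n c) ⟨k, some r⟩ ⟨i, none⟩ = 0 := by simp only [u]

theorem u_dec_ss_same {n : ℕ} {c : Fin n → TFT} (k : Fin n) (r s : Seq (c k)) :
    u (dec n c) ⟨k, some r⟩ ⟨k, some s⟩ = u (c k) r s := by simp [u]

theorem u_dec_ss_ne {n : ℕ} {c : Fin n → TFT} {k i : Fin n} (h : i ≠ k) (r : Seq (c k))
    (s : Seq (c i)) : u (dec n c) ⟨k, some r⟩ ⟨i, some s⟩ = 0 := by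
  simp only [u]; rw [dif_neg h]

theorem u_obs_same {n : ℕ} {c : Fin n → TFT} (k : Fin n) (r s : Seq (c k)) :
    u (obs n c) ⟨k, r⟩ ⟨k, s⟩ = u (c k) r s := by simp [u]

theorem u_obs_ne {n : ℕ} {c : Fin n → TFT} {k i : Fin n} (h : i ≠ k) (r : Seq (c k))
    (s : Seq (c i)) : u (obs n c) ⟨k, r⟩ ⟨i, s⟩ = 0 := by
  simp only [u]; rw [dif_neg h]

theorem decW_dec_none {n : ℕ} {c : Fin n → TFT} (i : Fin n) :
    decW (dec n c) ⟨i, none⟩ = wt (dec n c) := by simp only [decW]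

theorem decW_dec_some {n : ℕ} {c : Fin n → TFT} (i : Fin n) (s : Seq (c i)) :
    decW (dec n c) ⟨i, some s⟩ = decW (c i) s := by simp only [decW]

theorem decW_obs {n : ℕ} {c : Fin n → TFT} (i : Fin n) (s : Seq (c i)) :
    decW (obs n c) ⟨i, s⟩ = decW (c i) s := by simp only [decW]

theorem succW_dec_none {n : ℕ} {c : Fin n → TFT} (i : Fin n) :
    succW (dec n c) ⟨i, none⟩ = wt (c i) := by simp only [succW]

theorem succW_dec_some {n : ℕ} {c : Fin n → TFT} (i : Fin n) (s : Seq (c i)) :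
    succW (dec n c) ⟨i, some s⟩ = succW (c i) s := by simp only [succW]

theorem succW_obs {n : ℕ} {c : Fin n → TFT} (i : Fin n) (s : Seq (c i)) :
    succW (obs n c) ⟨i, s⟩ = succW (c i) s := by simp only [succW]

theorem foldr_max_nonneg (l : List ℝ) : 0 ≤ l.foldr max 0 := by
  induction l with
  | nil => simp
  | cons a l ih => exact le_trans ih (le_max_right _ _)

theorem decW_pos : ∀ (t : TFT) (σ : Seq t), 0 < decW t σ := by
  intro t
  induction t with
  | term => exact fun σ => Empty.elim σ
  | dec n c ih =>
      rintro ⟨i, o⟩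
      cases o with
      | none =>
          rw [decW_dec_none, wt]
          nlinarith [foldr_max_nonneg (List.ofFn fun i => wt (c i))]
      | some s => rw [decW_dec_some]; exact ih i s
  | obs n c ih => rintro ⟨i, s⟩; rw [decW_obs]; exact ih i s

theorem u_self : ∀ (t : TFT) (σ : Seq t), u t σ σ = 1 := by
  intro t
  induction t with
  | term => exact fun σ => Empty.elim σ
  | dec n c ih =>
      rintro ⟨i, o⟩
      cases o with
      | none => simp [u]
      | some s => rw [u_dec_ss_same]; exact ih i s
  | obs n c ih => rintro ⟨i, s⟩; rw [u_obs_same]; exact ih i s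

theorem dec_sn_ne_sm {n : ℕ} {c : Fin n → TFT} {i k : Fin n} {s : Seq (c i)} :
    @Ne (Seq (dec n c)) ⟨i, some s⟩ ⟨k, none⟩ := by
  intro hx
  rcases eq_or_ne i k with rfl | hik
  · exact opt_nc (dec_mk_eq_same.mp hx)
  · exact dec_mk_ne hik hx

theorem dec_nm_ne_ss {n : ℕ} {c : Fin n → TFT} {i k : Fin n} {s : Seq (c k)} :
    @Ne (Seq (dec n c)) ⟨i, none⟩ ⟨k, some s⟩ := by
  intro hx
  rcases eq_or_ne i k with rfl | hik
  · exact opt_nc (dec_mk_eq_same.mp hx)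
  · exact dec_mk_ne hik hx

theorem dec_ss_ne {n : ℕ} {c : Fin n → TFT} {i : Fin n} {s r : Seq (c i)} (h : s ≠ r) :
    @Ne (Seq (dec n c)) ⟨i, some s⟩ ⟨i, some r⟩ := by
  intro hx
  exact h (Option.some_inj.mp (dec_mk_eq_same.mp hx))

theorem obs_ss_ne {n : ℕ} {c : Fin n → TFT} {i : Fin n} {s r : Seq (c i)} (h : s ≠ r) :
    @Ne (Seq (obs n c)) ⟨i, s⟩ ⟨i, r⟩ := by
  intro hx
  exact h (obs_mk_eq_same.mp hx)

theorem u_G1 : ∀ (t : TFT) (σ : Seq t), parent t σ = none →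
    ∀ τ : Seq t, u t τ σ = if σ = τ then 1 else 0 := by
  intro t
  induction t with
  | term => exact fun σ => Empty.elim σ
  | dec n c ih =>
      rintro ⟨i, o⟩ h ⟨k, o'⟩
      cases o with
      | none =>
          cases o' with
          | none =>
              rw [u_dec_root]
              rcases eq_or_ne i k with rfl | hik
              · simp; rfl
              · rw [if_neg hik, if_neg (dec_mk_ne hik)]
          | some r => rw [u_dec_sn, if_neg dec_nm_ne_ss]
      | some s =>
          rcases hps : parent (c i) s with _ | q
          · rw [parent_dec_some_none hps] at h; exact opt_nc h
          · rw [parent_dec_some_some hps] at h; exact opt_nc h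
  | obs n c ih =>
      rintro ⟨i, s⟩ h ⟨k, r⟩
      rw [parent_obs, @Option.map_eq_none_iff (Seq (c i)) _ (Seq (obs n c)) (fun q => ⟨i, q⟩)] at h
      rcases eq_or_ne i k with rfl | hik
      · rw [u_obs_same, ih i s h r]
        rcases eq_or_ne s r with rfl | hsr
        · simp; rfl
        · rw [if_neg hsr, if_neg (obs_ss_ne hsr)]
      · rw [u_obs_ne hik, if_neg (obs_mk_ne hik)]

theorem u_G2 : ∀ (t : TFT) (σ ρ : Seq t), parent t σ = some ρ →
    ∀ τ : Seq t, u t τ σ = (if σ = τ then 1 else 0) + u t τ ρ := by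
  intro t
  induction t with
  | term => exact fun σ => Empty.elim σ
  | dec n c ih =>
      rintro ⟨i, o⟩ ρ h ⟨k, o'⟩
      cases o with
      | none => rw [parent_dec_none] at h; exact opt_nc h
      | some s =>
          rcases hps : parent (c i) s with _ | q
          · rw [parent_dec_some_none hps] at h
            obtain rfl : ρ = ⟨i, none⟩ := (Option.some_inj.mp h).symm
            cases o' with
            | none =>
                rw [u_dec_root, u_dec_root, if_neg dec_sn_ne_sm]; ring
            | some r =>
                rcases eq_or_ne i k with rfl | hik
                · rw [u_dec_ss_same, u_dec_sn, u_G1 (c i) s hps r]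
                  rcases eq_or_ne s r with rfl | hsr
                  · simp; rfl
                  · rw [if_neg hsr, if_neg (dec_ss_ne hsr)]; ring
                · rw [u_dec_ss_ne hik, u_dec_sn, if_neg (dec_mk_ne hik)]; ring
          · rw [parent_dec_some_some hps] at h
            obtain rfl : ρ = ⟨i, some q⟩ := (Option.some_inj.mp h).symm
            cases o' with
            | none =>
                rw [u_dec_root, u_dec_root, if_neg dec_sn_ne_sm]; ring
            | some r =>
                rcases eq_or_ne i k with rfl | hik
                · rw [u_dec_ss_same, u_dec_ss_same, ih i s q hps r]
                  rcases eq_or_ne s r with rfl | hsr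
                  · simp; rfl
                  · rw [if_neg (dec_ss_ne hsr), if_neg hsr]
                · rw [u_dec_ss_ne hik, u_dec_ss_ne hik, if_neg (dec_mk_ne hik)]; ring
  | obs n c ih =>
      rintro ⟨i, s⟩ ρ h ⟨k, r⟩
      rw [parent_obs] at h
      rcases hps : parent (c i) s with _ | q
      · rw [hps] at h; exact opt_nc h
      · rw [hps] at h
        obtain rfl : ρ = ⟨i, q⟩ := (Option.some_inj.mp h).symm
        rcases eq_or_ne i k with rfl | hik
        · rw [u_obs_same, u_obs_same, ih i s q hps r]
          rcases eq_or_ne s r with rfl | hsr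
          · simp; rfl
          · rw [if_neg (obs_ss_ne hsr), if_neg hsr]
        · rw [u_obs_ne hik, u_obs_ne hik, if_neg (obs_mk_ne hik)]; ring

theorem u_parent_zero {t : TFT} {τ σ : Seq t} (h : parent t τ = some σ) : u t τ σ = 0 := by
  have := u_G2 t τ σ h τ
  rw [u_self, if_pos rfl] at this
  linarith

theorem parent_ne_self {t : TFT} {σ : Seq t} (h : parent t σ = some σ) : False := by
  have := u_parent_zero h
  rw [u_self] at this
  exact one_ne_zero this

theorem u_child_eq {t : TFT} {σ' σ τ : Seq t} (h : parent t σ' = some σ) (hne : σ' ≠ τ) :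
    u t τ σ' = u t τ σ := by
  rw [u_G2 t σ' σ h τ, if_neg hne, zero_add]

theorem no_two_cycle {t : TFT} {σ ρ : Seq t} (h1 : parent t σ = some ρ)
    (h2 : parent t ρ = some σ) : False := by
  have hne : σ ≠ ρ := fun he => parent_ne_self (he ▸ h1)
  have h3 : u t ρ σ = u t ρ ρ := u_child_eq h1 hne
  rw [u_self] at h3
  have h4 : u t ρ σ = 0 := u_parent_zero h2
  rw [h4] at h3
  exact one_ne_zero h3.symm

theorem parent_dec_some_ne_none {n : ℕ} {c : Fin n → TFT} {i : Fin n} {s : Seq (c i)} :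
    parent (dec n c) ⟨i, some s⟩ ≠ none := by
  rcases hps : parent (c i) s with _ | q
  · rw [parent_dec_some_none hps]; exact opt_nc
  · rw [parent_dec_some_some hps]; exact opt_nc

theorem lemC : ∀ (t : TFT) (σ'' : Seq t),
    ∑ τ, (if parent t τ = none then u t τ σ'' else 0) = 1 := by
  intro t
  induction t with
  | term => exact fun σ => Empty.elim σ
  | dec n c ih =>
      rintro ⟨i'', o''⟩
      rw [sum_dec]
      have h1 : ∀ k : Fin n,
          ((if parent (dec n c) ⟨k, none⟩ = none then u (dec n c) ⟨k, none⟩ ⟨i'', o''⟩ else 0) +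
            ∑ r, (if parent (dec n c) ⟨k, some r⟩ = none
              then u (dec n c) ⟨k, some r⟩ ⟨i'', o''⟩ else 0))
          = if i'' = k then 1 else 0 := by
        intro k
        rw [if_pos (parent_dec_none k), u_dec_root]
        rw [Finset.sum_eq_zero fun r _ => if_neg parent_dec_some_ne_none, add_zero]
      rw [Finset.sum_congr rfl fun k _ => h1 k, Finset.sum_ite_eq]
      simp
  | obs n c ih =>
      rintro ⟨i'', s''⟩
      rw [sum_obs]
      have h1 : ∀ k : Fin n,
          (∑ r, (if parent (obs n c) ⟨k, r⟩ = none
              then u (obs n c) ⟨k, r⟩ ⟨i'', s''⟩ else 0))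
          = if i'' = k then 1 else 0 := by
        intro k
        rcases eq_or_ne i'' k with rfl | hik
        · rw [if_pos rfl, ← ih i'' s'']
          refine Finset.sum_congr rfl fun r _ => ?_
          rw [parent_obs, u_obs_same]
          simp only [@Option.map_eq_none_iff (Seq (c i'')) _ (Seq (obs n c)) (fun q => ⟨i'', q⟩)]
        · rw [if_neg hik]
          refine Finset.sum_eq_zero fun r _ => ?_
          rw [u_obs_ne hik]
          simp
      rw [Finset.sum_congr rfl fun k _ => h1 k, Finset.sum_ite_eq]
      simp

theorem parent_dec_ne {n : ℕ} {c : Fin n → TFT} {k i : Fin n} {r : Seq (c k)}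
    {o : Option (Seq (c i))} (hik : k ≠ i) :
    parent (dec n c) ⟨k, some r⟩ ≠ some ⟨i, o⟩ := by
  rcases hpr : parent (c k) r with _ | q
  · rw [parent_dec_some_none hpr]
    exact fun hx => dec_mk_ne hik (Option.some_inj.mp hx)
  · rw [parent_dec_some_some hpr]
    exact fun hx => dec_mk_ne hik (Option.some_inj.mp hx)

theorem parent_obs_ne {n : ℕ} {c : Fin n → TFT} {k i : Fin n} (hik : k ≠ i)
    {r : Seq (c k)} {q : Seq (c i)} :
    parent (obs n c) ⟨k, r⟩ ≠ some ⟨i, q⟩ := by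
  rw [parent_obs]
  rcases hpr : parent (c k) r with _ | q'
  · rw [@Option.map_none (Seq (c k)) (Seq (obs n c)) (fun q => ⟨k, q⟩)]; exact fun hx => opt_nc hx
  · rw [@Option.map_some (Seq (c k)) (Seq (obs n c)) _ (fun q => ⟨k, q⟩)]
    exact fun hx => obs_mk_ne hik (Option.some_inj.mp hx)

theorem lemB : ∀ (t : TFT) (σ σ'' : Seq t),
    u t σ σ'' = (if σ'' = σ then 1 else 0) +
      ∑ τ, (if parent t τ = some σ then u t τ σ'' else 0) := by
  intro t
  induction t with
  | term => exact fun σ => Empty.elim σ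
  | dec n c ih =>
      rintro ⟨i, o⟩ ⟨i'', o''⟩
      cases o with
      | none =>
          have key : (∑ τ : Seq (dec n c),
              if parent (dec n c) τ = some ⟨i, none⟩ then u (dec n c) τ ⟨i'', o''⟩ else 0)
              = ∑ r, (if parent (c i) r = none
                  then u (dec n c) ⟨i, some r⟩ ⟨i'', o''⟩ else 0) := by
            rw [sum_dec]
            rw [Finset.sum_eq_single_of_mem i (Finset.mem_univ i)
              (fun b _ hbi => by
                rw [if_neg (by rw [parent_dec_none]; exact fun hx => opt_nc hx),
                  zero_add]
                exact Finset.sum_eq_zero fun r _ => if_neg (parent_dec_ne hbi))]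
            rw [if_neg (by rw [parent_dec_none]; exact fun hx => opt_nc hx),
              zero_add]
            refine Finset.sum_congr rfl fun r _ => ?_
            rcases hpr : parent (c i) r with _ | q
            · rw [parent_dec_some_none hpr, if_pos rfl, if_pos rfl]
            · rw [parent_dec_some_some hpr,
                if_neg (fun hx => opt_nc (dec_mk_eq_same.mp (Option.some_inj.mp hx))),
                if_neg (fun hx => opt_nc hx)]
          rw [key]
          rcases eq_or_ne i'' i with rfl | hne
          · cases o'' with
            | none =>
                rw [u_dec_root, if_pos rfl, if_pos (rfl : @Eq (Seq (dec n c)) ⟨i'', none⟩ ⟨i'', none⟩),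
                  Finset.sum_eq_zero fun r _ => by rw [u_dec_sn, ite_self]]
                norm_num
            | some s'' =>
                rw [u_dec_root, if_pos rfl, if_neg dec_sn_ne_sm]
                rw [Finset.sum_congr rfl fun r _ => by rw [u_dec_ss_same]]
                rw [lemC (c i'') s'']
                norm_num
          · have hL : u (dec n c) ⟨i, none⟩ ⟨i'', o''⟩ = 0 := by
              rw [u_dec_root, if_neg hne]
            have hterm : ∀ r : Seq (c i), u (dec n c) ⟨i, some r⟩ ⟨i'', o''⟩ = 0 := by
              intro r
              cases o'' with
              | none => rw [u_dec_sn]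
              | some s'' => rw [u_dec_ss_ne hne]
            rw [hL, if_neg (dec_mk_ne hne),
              Finset.sum_eq_zero fun r _ => by rw [hterm r, ite_self]]
            norm_num
      | some s =>
          have key : (∑ τ : Seq (dec n c),
              if parent (dec n c) τ = some ⟨i, some s⟩ then u (dec n c) τ ⟨i'', o''⟩ else 0)
              = ∑ r, (if parent (c i) r = some s
                  then u (dec n c) ⟨i, some r⟩ ⟨i'', o''⟩ else 0) := by
            rw [sum_dec]
            rw [Finset.sum_eq_single_of_mem i (Finset.mem_univ i)
              (fun b _ hbi => by
                rw [if_neg (by rw [parent_dec_none]; exact fun hx => opt_nc hx),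
                  zero_add]
                exact Finset.sum_eq_zero fun r _ => if_neg (parent_dec_ne hbi))]
            rw [if_neg (by rw [parent_dec_none]; exact fun hx => opt_nc hx),
              zero_add]
            refine Finset.sum_congr rfl fun r _ => ?_
            rcases hpr : parent (c i) r with _ | q
            · rw [parent_dec_some_none hpr,
                if_neg (fun hx => opt_nc ((dec_mk_eq_same.mp (Option.some_inj.mp hx)).symm)),
                if_neg (fun hx => opt_nc hx)]
            · rw [parent_dec_some_some hpr]
              rcases eq_or_ne q s with rfl | hqs
              · rw [if_pos rfl, if_pos rfl]
              · rw [if_neg (fun hx => hqs (Option.some_inj.mp (dec_mk_eq_same.mp (Option.some_inj.mp hx)))),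
                  if_neg (fun hx => hqs (Option.some_inj.mp hx))]
          rw [key]
          rcases eq_or_ne i'' i with rfl | hne
          · cases o'' with
            | none =>
                rw [u_dec_sn, if_neg dec_nm_ne_ss,
                  Finset.sum_eq_zero fun r _ => by rw [u_dec_sn, ite_self]]
                norm_num
            | some s'' =>
                rw [u_dec_ss_same]
                have hcond : (@Eq (Seq (dec n c)) ⟨i'', some s''⟩ ⟨i'', some s⟩) ↔ s'' = s :=
                  dec_mk_eq_same.trans Option.some_inj
                simp only [hcond]
                rw [Finset.sum_congr rfl fun r _ => by rw [u_dec_ss_same]]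
                exact ih i'' s s''
          · have hL : u (dec n c) ⟨i, some s⟩ ⟨i'', o''⟩ = 0 := by
              cases o'' with
              | none => rw [u_dec_sn]
              | some s'' => rw [u_dec_ss_ne hne]
            have hterm : ∀ r : Seq (c i), u (dec n c) ⟨i, some r⟩ ⟨i'', o''⟩ = 0 := by
              intro r
              cases o'' with
              | none => rw [u_dec_sn]
              | some s'' => rw [u_dec_ss_ne hne]
            rw [hL, if_neg (dec_mk_ne hne),
              Finset.sum_eq_zero fun r _ => by rw [hterm r, ite_self]]
            norm_num
  | obs n c ih =>
      rintro ⟨i, q⟩ ⟨i'', s''⟩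
      have key : (∑ τ : Seq (obs n c),
          if parent (obs n c) τ = some ⟨i, q⟩ then u (obs n c) τ ⟨i'', s''⟩ else 0)
          = ∑ r, (if parent (c i) r = some q
              then u (obs n c) ⟨i, r⟩ ⟨i'', s''⟩ else 0) := by
        rw [sum_obs]
        rw [Finset.sum_eq_single_of_mem i (Finset.mem_univ i)
          (fun b _ hbi => Finset.sum_eq_zero fun r _ => if_neg (parent_obs_ne hbi))]
        refine Finset.sum_congr rfl fun r _ => ?_
        rw [parent_obs]
        rcases hpr : parent (c i) r with _ | q'
        · rw [@Option.map_none (Seq (c i)) (Seq (obs n c)) (fun q => ⟨i, q⟩), if_neg (fun hx => opt_nc hx),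
            if_neg (fun hx => opt_nc hx)]
        · rw [@Option.map_some (Seq (c i)) (Seq (obs n c)) _ (fun q => ⟨i, q⟩)]
          rcases eq_or_ne q' q with rfl | hq
          · rw [if_pos rfl, if_pos rfl]
          · rw [if_neg (fun hx => hq (obs_mk_eq_same.mp (Option.some_inj.mp hx))),
              if_neg (fun hx => hq (Option.some_inj.mp hx))]
      rw [key]
      rcases eq_or_ne i'' i with rfl | hne
      · rw [u_obs_same]
        have hcond : (@Eq (Seq (obs n c)) ⟨i'', s''⟩ ⟨i'', q⟩) ↔ s'' = q := obs_mk_eq_same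
        simp only [hcond]
        rw [Finset.sum_congr rfl fun r _ => by rw [u_obs_same]]
        exact ih i'' q s''
      · rw [u_obs_ne hne, if_neg (obs_mk_ne hne),
          Finset.sum_eq_zero fun r _ => by rw [u_obs_ne hne, ite_self]]
        norm_num

theorem sum_roots_dec {n : ℕ} {c : Fin n → TFT} (g : Seq (dec n c) → ℝ) :
    ∑ τ : Seq (dec n c), (if parent (dec n c) τ = none then g τ else 0)
      = ∑ k, g ⟨k, none⟩ := by
  rw [sum_dec]
  refine Finset.sum_congr rfl fun k _ => ?_
  rw [if_pos (parent_dec_none k),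
    Finset.sum_eq_zero fun r _ => if_neg parent_dec_some_ne_none, add_zero]

theorem sum_roots_obs {n : ℕ} {c : Fin n → TFT} (g : Seq (obs n c) → ℝ) :
    ∑ τ : Seq (obs n c), (if parent (obs n c) τ = none then g τ else 0)
      = ∑ k, ∑ r, (if parent (c k) r = none then g ⟨k, r⟩ else 0) := by
  rw [sum_obs]
  refine Finset.sum_congr rfl fun k _ => Finset.sum_congr rfl fun r _ => ?_
  rw [parent_obs]
  rcases hpr : parent (c k) r with _ | q
  · rw [@Option.map_none (Seq (c k)) (Seq (obs n c)) (fun q => ⟨k, q⟩), if_pos rfl, if_pos rfl]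
  · rw [@Option.map_some (Seq (c k)) (Seq (obs n c)) _ (fun q => ⟨k, q⟩), if_neg (fun hx => opt_nc hx),
      if_neg (fun hx => opt_nc hx)]

theorem sum_children_dec_none {n : ℕ} {c : Fin n → TFT} (g : Seq (dec n c) → ℝ) (i : Fin n) :
    ∑ τ : Seq (dec n c), (if parent (dec n c) τ = some ⟨i, none⟩ then g τ else 0)
      = ∑ r, (if parent (c i) r = none then g ⟨i, some r⟩ else 0) := by
  rw [sum_dec]
  rw [Finset.sum_eq_single_of_mem i (Finset.mem_univ i)
    (fun b _ hbi => by
      rw [if_neg (by rw [parent_dec_none]; exact fun hx => opt_nc hx), zero_add]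
      exact Finset.sum_eq_zero fun r _ => if_neg (parent_dec_ne hbi))]
  rw [if_neg (by rw [parent_dec_none]; exact fun hx => opt_nc hx), zero_add]
  refine Finset.sum_congr rfl fun r _ => ?_
  rcases hpr : parent (c i) r with _ | q
  · rw [parent_dec_some_none hpr, if_pos rfl, if_pos rfl]
  · rw [parent_dec_some_some hpr,
      if_neg (fun hx => opt_nc (dec_mk_eq_same.mp (Option.some_inj.mp hx))),
      if_neg (fun hx => opt_nc hx)]

theorem sum_children_dec_some {n : ℕ} {c : Fin n → TFT} (g : Seq (dec n c) → ℝ) (i : Fin n)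
    (s : Seq (c i)) :
    ∑ τ : Seq (dec n c), (if parent (dec n c) τ = some ⟨i, some s⟩ then g τ else 0)
      = ∑ r, (if parent (c i) r = some s then g ⟨i, some r⟩ else 0) := by
  rw [sum_dec]
  rw [Finset.sum_eq_single_of_mem i (Finset.mem_univ i)
    (fun b _ hbi => by
      rw [if_neg (by rw [parent_dec_none]; exact fun hx => opt_nc hx), zero_add]
      exact Finset.sum_eq_zero fun r _ => if_neg (parent_dec_ne hbi))]
  rw [if_neg (by rw [parent_dec_none]; exact fun hx => opt_nc hx), zero_add]
  refine Finset.sum_congr rfl fun r _ => ?_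
  rcases hpr : parent (c i) r with _ | q
  · rw [parent_dec_some_none hpr,
      if_neg (fun hx => opt_nc ((dec_mk_eq_same.mp (Option.some_inj.mp hx)).symm)),
      if_neg (fun hx => opt_nc hx)]
  · rw [parent_dec_some_some hpr]
    rcases eq_or_ne q s with rfl | hqs
    · rw [if_pos rfl, if_pos rfl]
    · rw [if_neg (fun hx => hqs (Option.some_inj.mp (dec_mk_eq_same.mp (Option.some_inj.mp hx)))),
        if_neg (fun hx => hqs (Option.some_inj.mp hx))]

theorem sum_children_obs {n : ℕ} {c : Fin n → TFT} (g : Seq (obs n c) → ℝ) (i : Fin n)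
    (q : Seq (c i)) :
    ∑ τ : Seq (obs n c), (if parent (obs n c) τ = some ⟨i, q⟩ then g τ else 0)
      = ∑ r, (if parent (c i) r = some q then g ⟨i, r⟩ else 0) := by
  rw [sum_obs]
  rw [Finset.sum_eq_single_of_mem i (Finset.mem_univ i)
    (fun b _ hbi => Finset.sum_eq_zero fun r _ => if_neg (parent_obs_ne hbi))]
  refine Finset.sum_congr rfl fun r _ => ?_
  rw [parent_obs]
  rcases hpr : parent (c i) r with _ | q'
  · rw [@Option.map_none (Seq (c i)) (Seq (obs n c)) (fun q => ⟨i, q⟩), if_neg (fun hx => opt_nc hx),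
      if_neg (fun hx => opt_nc hx)]
  · rw [@Option.map_some (Seq (c i)) (Seq (obs n c)) _ (fun q => ⟨i, q⟩)]
    rcases eq_or_ne q' q with rfl | hq
    · rw [if_pos rfl, if_pos rfl]
    · rw [if_neg (fun hx => hq (obs_mk_eq_same.mp (Option.some_inj.mp hx))),
        if_neg (fun hx => hq (Option.some_inj.mp hx))]

theorem lemD0 : ∀ (t : TFT) (x : Seq t → ℝ) (p : ℝ), IsSF t x p →
    ∑ σ, (if parent t σ = none then decW t σ * x σ else 0) = wt t * p := by
  intro t
  induction t with
  | term =>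
      intro x p _
      rw [wt, zero_mul]
      exact Finset.sum_eq_zero fun σ _ => Empty.elim σ
  | dec n c ih =>
      intro x p hsf
      obtain ⟨h1, _⟩ : (∑ i, x ⟨i, none⟩) = p ∧ _ := by
        rw [IsSF] at hsf; exact hsf
      rw [sum_roots_dec]
      rw [Finset.sum_congr rfl fun k _ => by rw [decW_dec_none]]
      rw [← Finset.mul_sum, h1]
  | obs n c ih =>
      intro x p hsf
      rw [IsSF] at hsf
      rw [sum_roots_obs, wt, Finset.sum_mul]
      refine Finset.sum_congr rfl fun k _ => ?_
      rw [← ih k _ p (hsf k)]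
      refine Finset.sum_congr rfl fun r _ => ?_
      rw [decW_obs]

theorem lemD : ∀ (t : TFT) (x : Seq t → ℝ) (p : ℝ), IsSF t x p → ∀ σ : Seq t,
    ∑ σ', (if parent t σ' = some σ then decW t σ' * x σ' else 0) = succW t σ * x σ := by
  intro t
  induction t with
  | term => exact fun x p _ σ => Empty.elim σ
  | dec n c ih =>
      intro x p hsf σ
      obtain ⟨h1, h2⟩ : (∑ i, x ⟨i, none⟩) = p ∧ _ := by
        rw [IsSF] at hsf; exact hsf
      obtain ⟨i, o⟩ := σ
      cases o with
      | none =>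
          rw [sum_children_dec_none, succW_dec_none]
          rw [Finset.sum_congr rfl fun r _ => by rw [decW_dec_some]]
          exact lemD0 (c i) _ _ (h2 i)
      | some s =>
          rw [sum_children_dec_some, succW_dec_some]
          rw [Finset.sum_congr rfl fun r _ => by rw [decW_dec_some]]
          exact ih i _ _ (h2 i) s
  | obs n c ih =>
      intro x p hsf σ
      rw [IsSF] at hsf
      obtain ⟨i, q⟩ := σ
      rw [sum_children_obs, succW_obs]
      rw [Finset.sum_congr rfl fun r _ => by rw [decW_obs]]
      exact ih i _ p (hsf i) q

theorem lemE (t : TFT) (x : Seq t → ℝ) (p : ℝ) (hsf : IsSF t x p) (τ σ : Seq t) :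
    ∑ σ', (if parent t σ' = some σ then decW t σ' * x σ' * u t τ σ' else 0)
      = u t τ σ * (succW t σ * x σ) + (if parent t τ = some σ then decW t τ * x τ else 0) := by
  have hpt : ∀ σ' : Seq t, (if parent t σ' = some σ then decW t σ' * x σ' * u t τ σ' else 0)
      = u t τ σ * (if parent t σ' = some σ then decW t σ' * x σ' else 0)
        + (if σ' = τ then (if parent t τ = some σ then decW t τ * x τ else 0) else 0) := by
    intro σ'
    rcases eq_or_ne σ' τ with rfl | hne
    · rw [if_pos rfl]
      by_cases hp : parent t σ' = some σ
      · simp only [if_pos hp, u_self, u_parent_zero hp]; ring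
      · simp only [if_neg hp]; ring
    · rw [if_neg hne, add_zero]
      by_cases hp : parent t σ' = some σ
      · simp only [if_pos hp, u_child_eq hp hne]; ring
      · simp only [if_neg hp]; ring
  rw [Finset.sum_congr rfl fun σ' _ => hpt σ', Finset.sum_add_distrib, ← Finset.mul_sum,
    lemD t x p hsf σ, Finset.sum_ite_eq' Finset.univ τ, if_pos (Finset.mem_univ τ)]

theorem lemA (t : TFT) (x : Seq t → ℝ) (p : ℝ) (hpos : ∀ σ, 0 < x σ) (hsf : IsSF t x p)
    (τ σ : Seq t) :
    ∑ σ', hess t x σ σ' * (x σ' * u t τ σ')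
      = decW t τ * (if σ = τ then 1 else 0)
        - (if parent t τ = some σ then decW t τ * x τ / x σ else 0) := by
  have hx : ∀ σ : Seq t, x σ ≠ 0 := fun σ => (hpos σ).ne'
  have split : ∀ σ', hess t x σ σ' * (x σ' * u t τ σ')
      = (if σ' = σ then (decW t σ + succW t σ) * u t τ σ else 0)
        + (-(1 / x σ) * (if parent t σ' = some σ then decW t σ' * x σ' * u t τ σ' else 0))
        + (if parent t σ = some σ' then -(decW t σ) * u t τ σ' else 0) := by
    intro σ'
    by_cases h1 : σ' = σ
    · subst h1
      have h2 : ¬ parent t σ' = some σ' := fun hc => parent_ne_self hc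
      simp only [hess, if_pos rfl, if_neg h2, if_true]
      field_simp [hx σ']
      ring
    · by_cases h2 : parent t σ' = some σ
      · have h3 : ¬ parent t σ = some σ' := fun hc => no_two_cycle h2 hc
        simp only [hess, if_neg h1, if_pos h2, if_neg h3]
        field_simp [hx σ]
        ring
      · by_cases h3 : parent t σ = some σ'
        · simp only [hess, if_neg h1, if_neg h2, if_pos h3]
          field_simp [hx σ']
          ring
        · simp only [hess, if_neg h1, if_neg h2, if_neg h3]
          ring
  rw [Finset.sum_congr rfl fun σ' _ => split σ', Finset.sum_add_distrib, Finset.sum_add_distrib,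
    Finset.sum_ite_eq' Finset.univ σ, if_pos (Finset.mem_univ σ), ← Finset.mul_sum,
    lemE t x p hsf τ σ]
  set e : ℝ := if σ = τ then 1 else 0 with he
  rcases hp : parent t σ with _ | ρ
  · rw [Finset.sum_eq_zero fun σ' _ => if_neg (fun hc => opt_nc hc)]
    rw [u_G1 t σ hp τ, ← he]
    by_cases hq : parent t τ = some σ
    · have hστ : σ ≠ τ := fun hceq => parent_ne_self (hceq ▸ hq)
      rw [if_pos hq, if_pos hq, he, if_neg hστ]
      field_simp [hx σ]
      ring
    · rw [if_neg hq, if_neg hq]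
      rcases eq_or_ne σ τ with rfl | hστ
      · rw [he, if_pos rfl]
        field_simp [hx σ]
        ring
      · rw [he, if_neg hστ]
        field_simp [hx σ]
        ring
  · rw [Finset.sum_congr rfl (fun σ' _ => show
        (if some ρ = some σ' then -(decW t σ) * u t τ σ' else 0)
          = (if σ' = ρ then -(decW t σ) * u t τ ρ else 0) from by
      rcases eq_or_ne σ' ρ with rfl | hne
      · rw [if_pos rfl, if_pos rfl]
      · rw [if_neg (fun hc => hne (Option.some_inj.mp hc).symm), if_neg hne]),
      Finset.sum_ite_eq' Finset.univ ρ, if_pos (Finset.mem_univ ρ)]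
    rw [u_G2 t σ ρ hp τ, ← he]
    by_cases hq : parent t τ = some σ
    · have hστ : σ ≠ τ := fun hceq => parent_ne_self (hceq ▸ hq)
      have huσ : u t τ σ = 0 := u_parent_zero hq
      have huρ : u t τ ρ = 0 := by
        have := u_G2 t σ ρ hp τ
        rw [huσ, if_neg (fun hc : σ = τ => hστ hc)] at this
        linarith
      rw [huρ, if_pos hq, if_pos hq, he, if_neg hστ]
      field_simp [hx σ]
      ring
    · rw [if_neg hq, if_neg hq]
      rcases eq_or_ne σ τ with rfl | hστ
      · rw [he, if_pos rfl]
        field_simp [hx σ]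
        ring
      · rw [he, if_neg hστ]
        field_simp [hx σ]
        ring

end Aux

open Matrix in
theorem hess_mul_dyadic (t : TFT) (x : Seq t → ℝ) (hpos : ∀ σ, 0 < x σ)
    (hsf : IsSF t x 1) :
    hess t x * (Matrix.of fun σ σ' : Seq t =>
        ∑ τ, (x σ * u t τ σ) * (x σ' * u t τ σ') / (decW t τ * x τ)) = 1 := by
  have hx : ∀ σ : Seq t, x σ ≠ 0 := fun σ => (hpos σ).ne'
  have hw : ∀ τ : Seq t, decW t τ ≠ 0 := fun τ => (decW_pos t τ).ne'
  ext σ σ''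
  rw [Matrix.mul_apply, Matrix.one_apply]
  have h1 : ∀ σ' : Seq t,
      hess t x σ σ' * (Matrix.of fun σ σ' : Seq t =>
        ∑ τ, (x σ * u t τ σ) * (x σ' * u t τ σ') / (decW t τ * x τ)) σ' σ''
      = ∑ τ, (hess t x σ σ' * (x σ' * u t τ σ'))
          * ((x σ'' * u t τ σ'') / (decW t τ * x τ)) := by
    intro σ'
    rw [Matrix.of_apply, Finset.mul_sum]
    exact Finset.sum_congr rfl fun τ _ => by ring
  rw [Finset.sum_congr rfl fun σ' _ => h1 σ', Finset.sum_comm]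
  rw [Finset.sum_congr rfl fun τ _ => by
    rw [← Finset.sum_mul, lemA t x 1 hpos hsf τ σ, sub_mul]]
  rw [Finset.sum_sub_distrib]
  have claim1 : ∀ τ : Seq t,
      decW t τ * (if σ = τ then 1 else 0) * (x σ'' * u t τ σ'' / (decW t τ * x τ))
        = if τ = σ then x σ'' * u t σ σ'' / x σ else 0 := by
    intro τ
    rcases eq_or_ne τ σ with rfl | hne
    · rw [if_pos rfl, if_pos rfl]
      field_simp [hx τ, hw τ]
    · rw [if_neg (fun hc => hne hc.symm), if_neg hne]
      ring
  have claim2 : ∀ τ : Seq t,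
      (if parent t τ = some σ then decW t τ * x τ / x σ else 0)
          * (x σ'' * u t τ σ'' / (decW t τ * x τ))
        = (x σ'' / x σ) * (if parent t τ = some σ then u t τ σ'' else 0) := by
    intro τ
    by_cases hp : parent t τ = some σ
    · rw [if_pos hp, if_pos hp]
      field_simp [hx τ, hw τ, hx σ]
    · rw [if_neg hp, if_neg hp]
      ring
  rw [Finset.sum_congr rfl fun τ _ => claim1 τ,
    Finset.sum_ite_eq' Finset.univ σ, if_pos (Finset.mem_univ σ)]
  rw [Finset.sum_congr rfl fun τ _ => claim2 τ, ← Finset.mul_sum]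
  have hB : (∑ τ : Seq t, if parent t τ = some σ then u t τ σ'' else 0)
      = u t σ σ'' - (if σ'' = σ then 1 else 0) := by
    have := lemB t σ σ''
    linarith [this]
  rw [hB]
  rcases eq_or_ne σ'' σ with rfl | hne
  · rw [show (if (σ'' : Seq t) = σ'' then (1:ℝ) else 0) = 1 from if_pos rfl, u_self t σ'']
    field_simp [hx σ'']
    norm_num
  · rw [if_neg hne, if_neg (fun hc : σ = σ'' => hne hc.symm)]
    ring

open Matrix in
/-- The squared local dual norm at a strictly positive sequence-form strategy `x`:
`‖z‖_{*,x}² = zᵀ (∇²ψ(x))⁻¹ z = Σ_{ja} (u_{ja}ᵀ (z ∘ x))² / (w_j x_{ja})`. -/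
theorem dual_local_norm_sq_eq (t : TFT) (x : Seq t → ℝ)
    (hpos : ∀ σ, 0 < x σ) (hsf : IsSF t x 1) (z : Seq t → ℝ) :
    z ⬝ᵥ (hess t x)⁻¹.mulVec z
      = ∑ σ : Seq t, (u t σ ⬝ᵥ fun σ' => z σ' * x σ') ^ 2 / (decW t σ * x σ) := by
  have hx : ∀ σ : Seq t, x σ ≠ 0 := fun σ => (hpos σ).ne'
  rw [Matrix.inv_eq_right_inv (hess_mul_dyadic t x hpos hsf)]
  simp only [Matrix.mulVec, dotProduct, Matrix.of_apply]
  have key : ∀ σ σ' : Seq t,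
      z σ * ((∑ τ, (x σ * u t τ σ) * (x σ' * u t τ σ') / (decW t τ * x τ)) * z σ')
        = ∑ τ, (u t τ σ * (z σ * x σ)) * (u t τ σ' * (z σ' * x σ')) / (decW t τ * x τ) := by
    intro σ σ'
    rw [Finset.sum_mul, Finset.mul_sum]
    exact Finset.sum_congr rfl fun τ _ => by ring
  simp only [Finset.mul_sum]
  simp only [key]
  rw [Finset.sum_congr rfl fun σ _ => Finset.sum_comm, Finset.sum_comm]
  refine Finset.sum_congr rfl fun τ _ => ?_
  have step : ∀ σ : Seq t,
      (∑ σ', (u t τ σ * (z σ * x σ)) * (u t τ σ' * (z σ' * x σ')) / (decW t τ * x τ))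
        = (u t τ σ * (z σ * x σ)) * (∑ σ', u t τ σ' * (z σ' * x σ')) / (decW t τ * x τ) := by
    intro σ
    rw [← Finset.sum_div, ← Finset.mul_sum]
  rw [Finset.sum_congr rfl fun σ _ => step σ, ← Finset.sum_div, ← Finset.sum_mul, sq]

end TFT
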